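/- Let α > 1 be a real algebraic number and ξ > 0 a real number, and suppose the set of limit points of the sequence of fractional parts {ξα^n}, n ∈ ℕ, is finite. Then for every ε > 0 there exist positive integers m, r, L with m > r such that ‖Lξ(α^m − α^r)α^n‖ < 2ε for every positive integer n. -/

import Mathlib

open Filter

/-- Distance to the nearest integer is at most distance to any integer. -/
lemma min_fract_le_abs_sub (x : ℝ) (z : ℤ) :
    min (Int.fract x) (1 - Int.fract x) ≤ |x - z| := by
  rcases le_or_gt z ⌊x⌋ with h | h
  · have h1 : Int.fract x ≤ x - z := by
      rw [← Int.self_sub_floor]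
      have : (z : ℝ) ≤ (⌊x⌋ : ℝ) := by exact_mod_cast h
      linarith
    exact le_trans (min_le_left _ _) (h1.trans (le_abs_self _))
  · have h2 : 1 - Int.fract x ≤ z - x := by
      rw [← Int.self_sub_floor]
      have : (⌊x⌋ : ℝ) + 1 ≤ (z : ℝ) := by exact_mod_cast h
      linarith
    calc min (Int.fract x) (1 - Int.fract x) ≤ 1 - Int.fract x := min_le_right _ _
      _ ≤ z - x := h2
      _ ≤ |z - x| := le_abs_self _
      _ = |x - z| := abs_sub_comm _ _

/-- A sequence with values in `[0,1]` eventually stays close to its cluster set. -/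
lemma eventually_close_to_clusterSet (u : ℕ → ℝ) (hu : ∀ n, u n ∈ Set.Icc (0:ℝ) 1)
    {δ : ℝ} (hδ : 0 < δ) :
    ∃ N : ℕ, ∀ n ≥ N, ∃ s, MapClusterPt s atTop u ∧ |u n - s| < δ := by
  by_contra hcon
  push_neg at hcon
  have hfreq : ∃ᶠ n in atTop, n ∈ {n | ∀ s, MapClusterPt s atTop u → δ ≤ |u n - s|} := by
    rw [frequently_atTop]
    intro N
    obtain ⟨n, hn, hn'⟩ := hcon N
    exact ⟨n, hn, fun s hs => hn' s hs⟩
  set B : Set ℕ := {n | ∀ s, MapClusterPt s atTop u → δ ≤ |u n - s|}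
  haveI : NeBot (atTop ⊓ Filter.principal B) := frequently_mem_iff_neBot.mp hfreq
  have hle : map u (atTop ⊓ Filter.principal B) ≤ Filter.principal (Set.Icc (0:ℝ) 1) := by
    rw [le_principal_iff, mem_map]
    exact Filter.Eventually.of_forall (fun n => hu n)
  obtain ⟨x, hxIcc, hcl⟩ := isCompact_Icc.exists_clusterPt hle
  have hxS : MapClusterPt x atTop u := by
    exact (show MapClusterPt x (atTop ⊓ Filter.principal B) u from hcl).mono inf_le_left
  have hC : map u (atTop ⊓ Filter.principal B) ≤ Filter.principal {y | δ ≤ |y - x|} := by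
    rw [le_principal_iff, mem_map]
    filter_upwards [inf_le_right (a := atTop) (b := Filter.principal B) (mem_principal_self B)]
      with n hn
    exact hn x hxS
  have hxC : x ∈ closure {y : ℝ | δ ≤ |y - x|} :=
    mem_closure_iff_clusterPt.mpr (hcl.mono hC)
  have hclosed : IsClosed {y : ℝ | δ ≤ |y - x|} :=
    isClosed_le continuous_const ((continuous_id.sub continuous_const).abs)
  have := hclosed.closure_subset hxC
  simp only [Set.mem_setOf_eq, sub_self, abs_zero] at this
  linarith

/-- Simultaneous Dirichlet approximation for a finite set of reals. -/
lemma exists_simultaneous_dirichlet {D : Set ℝ} (hD : D.Finite) {ε : ℝ} (hε : 0 < ε) :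
    ∃ L : ℕ, 0 < L ∧ ∀ d ∈ D, ∃ z : ℤ, |(L : ℝ) * d - z| < ε := by
  haveI := hD.fintype
  set v : ℕ → (D → ℝ) := fun L d => Int.fract ((L : ℝ) * (d : ℝ)) with hv
  have hvmem : ∀ L, v L ∈ Set.pi Set.univ (fun _ : D => Set.Icc (0:ℝ) 1) := by
    intro L d _
    exact ⟨Int.fract_nonneg _, (Int.fract_lt_one _).le⟩
  have hK : IsCompact (Set.pi Set.univ (fun _ : D => Set.Icc (0:ℝ) 1)) :=
    isCompact_univ_pi (fun _ => isCompact_Icc)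
  have hle : map v atTop ≤ Filter.principal (Set.pi Set.univ (fun _ : D => Set.Icc (0:ℝ) 1)) := by
    rw [le_principal_iff, mem_map]
    exact Filter.Eventually.of_forall hvmem
  obtain ⟨x, _, hcl⟩ := hK.exists_clusterPt hle
  have hmc : MapClusterPt x atTop v := hcl
  have hfreq : ∃ᶠ L in atTop, v L ∈ Metric.ball x (ε / 2) :=
    (mapClusterPt_iff_frequently.mp hmc) _ (Metric.ball_mem_nhds x (by linarith))
  obtain ⟨L1, hL1⟩ := hfreq.exists
  obtain ⟨L2, hL2, hL2'⟩ := (hfreq.and_eventually (eventually_gt_atTop L1)).exists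
  refine ⟨L2 - L1, Nat.sub_pos_of_lt hL2', fun d hd => ?_⟩
  refine ⟨⌊(L2 : ℝ) * d⌋ - ⌊(L1 : ℝ) * d⌋, ?_⟩
  have hc : ((L2 - L1 : ℕ) : ℝ) = (L2 : ℝ) - (L1 : ℝ) := by
    exact_mod_cast Nat.cast_sub (R := ℝ) hL2'.le
  have hd1 : dist (v L1 ⟨d, hd⟩) (x ⟨d, hd⟩) < ε / 2 := by
    have := Metric.mem_ball.mp hL1
    exact lt_of_le_of_lt (dist_le_pi_dist _ _ _) this
  have hd2 : dist (v L2 ⟨d, hd⟩) (x ⟨d, hd⟩) < ε / 2 := by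
    have := Metric.mem_ball.mp hL2
    exact lt_of_le_of_lt (dist_le_pi_dist _ _ _) this
  have key : |Int.fract ((L2 : ℝ) * d) - Int.fract ((L1 : ℝ) * d)| < ε := by
    have h1 : |Int.fract ((L1 : ℝ) * d) - x ⟨d, hd⟩| < ε / 2 := by
      rw [← Real.dist_eq]; exact hd1
    have h2 : |Int.fract ((L2 : ℝ) * d) - x ⟨d, hd⟩| < ε / 2 := by
      rw [← Real.dist_eq]; exact hd2
    calc |Int.fract ((L2 : ℝ) * d) - Int.fract ((L1 : ℝ) * d)|
        ≤ |Int.fract ((L2 : ℝ) * d) - x ⟨d, hd⟩| + |x ⟨d, hd⟩ - Int.fract ((L1 : ℝ) * d)| :=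
          abs_sub_le _ _ _
      _ = |Int.fract ((L2 : ℝ) * d) - x ⟨d, hd⟩| + |Int.fract ((L1 : ℝ) * d) - x ⟨d, hd⟩| := by
          rw [abs_sub_comm (x ⟨d, hd⟩)]
      _ < ε := by linarith
  rw [hc]
  push_cast
  have e1 : (L1 : ℝ) * d - ⌊(L1 : ℝ) * d⌋ = Int.fract ((L1 : ℝ) * d) := Int.self_sub_floor _
  have e2 : (L2 : ℝ) * d - ⌊(L2 : ℝ) * d⌋ = Int.fract ((L2 : ℝ) * d) := Int.self_sub_floor _
  have : ((L2:ℝ) - L1) * d - ((⌊(L2 : ℝ) * d⌋ : ℝ) - (⌊(L1 : ℝ) * d⌋ : ℝ))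
      = Int.fract ((L2 : ℝ) * d) - Int.fract ((L1 : ℝ) * d) := by linarith
  rw [this]
  exact key

/-- Let `α > 1` be a real algebraic number and `ξ > 0` real, and suppose the set of limit
points of `{ξ αⁿ}`, `n ∈ ℕ`, is finite. Then for every `ε > 0` there are positive integers
`m > r` and `L` such that `‖L ξ (α^m - α^r) αⁿ‖ < 2ε` for every `n ≥ 1`, where
`‖x‖ = min({x}, 1 - {x})` is the distance from `x` to the nearest integer. -/
theorem exists_small_norms_of_finite_limit_points (α ξ : ℝ) (hα : 1 < α)
    (halg : IsAlgebraic ℚ α) (hξ : 0 < ξ)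
    (hfin : {x : ℝ | MapClusterPt x atTop (fun n : ℕ => Int.fract (ξ * α ^ n))}.Finite) :
    ∀ ε : ℝ, 0 < ε → ∃ m r L : ℕ, 0 < r ∧ r < m ∧ 0 < L ∧
      ∀ n : ℕ, 1 ≤ n →
        min (Int.fract ((L : ℝ) * ξ * (α ^ m - α ^ r) * α ^ n))
            (1 - Int.fract ((L : ℝ) * ξ * (α ^ m - α ^ r) * α ^ n)) < 2 * ε := by
  intro ε hε
  set u : ℕ → ℝ := fun n => Int.fract (ξ * α ^ n) with hu
  set S := {x : ℝ | MapClusterPt x atTop u} with hS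
  have hDfin : (Set.image2 (fun a b => a - b) S S).Finite := Set.Finite.image2 _ hfin hfin
  obtain ⟨L, hL0, hLdir⟩ := exists_simultaneous_dirichlet hDfin hε
  have hLpos : (0:ℝ) < (L : ℝ) := by exact_mod_cast hL0
  set δ : ℝ := ε / (2 * L) with hδdef
  have hδ : 0 < δ := by positivity
  obtain ⟨N, hN⟩ := eventually_close_to_clusterSet u
    (fun n => ⟨Int.fract_nonneg _, (Int.fract_lt_one _).le⟩) hδ
  refine ⟨N + 2, N + 1, L, Nat.succ_pos N, Nat.lt_succ_self _, hL0, ?_⟩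
  intro n hn
  obtain ⟨s1, hs1S, hs1⟩ := hN (N + 2 + n) (by omega)
  obtain ⟨s2, hs2S, hs2⟩ := hN (N + 1 + n) (by omega)
  obtain ⟨z, hz⟩ := hLdir (s1 - s2) (Set.mem_image2_of_mem hs1S hs2S)
  set Y : ℝ := (L : ℝ) * ξ * (α ^ (N + 2) - α ^ (N + 1)) * α ^ n with hY
  set Z : ℤ := L * (⌊ξ * α ^ (N + 2 + n)⌋ - ⌊ξ * α ^ (N + 1 + n)⌋) + z with hZ
  have e1 : u (N + 2 + n) = ξ * α ^ (N + 2 + n) - ⌊ξ * α ^ (N + 2 + n)⌋ :=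
    (Int.self_sub_floor _).symm
  have e2 : u (N + 1 + n) = ξ * α ^ (N + 1 + n) - ⌊ξ * α ^ (N + 1 + n)⌋ :=
    (Int.self_sub_floor _).symm
  have hYeq : Y - (Z : ℝ) = (L : ℝ) * (u (N + 2 + n) - s1) - (L : ℝ) * (u (N + 1 + n) - s2)
      + ((L : ℝ) * (s1 - s2) - z) := by
    rw [hY, hZ, e1, e2, pow_add α (N + 2) n, pow_add α (N + 1) n]
    push_cast
    ring
  have hLδ : (L : ℝ) * δ = ε / 2 := by
    rw [hδdef]
    field_simp
  have key : |Y - (Z : ℝ)| < 2 * ε := by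
    have b1 : |(L : ℝ) * (u (N + 2 + n) - s1)| < ε / 2 := by
      rw [abs_mul, abs_of_pos hLpos]
      calc (L : ℝ) * |u (N + 2 + n) - s1| < (L : ℝ) * δ :=
            mul_lt_mul_of_pos_left hs1 hLpos
        _ = ε / 2 := hLδ
    have b2 : |(L : ℝ) * (u (N + 1 + n) - s2)| < ε / 2 := by
      rw [abs_mul, abs_of_pos hLpos]
      calc (L : ℝ) * |u (N + 1 + n) - s2| < (L : ℝ) * δ :=
            mul_lt_mul_of_pos_left hs2 hLpos
        _ = ε / 2 := hLδ
    calc |Y - (Z : ℝ)| = |(L : ℝ) * (u (N + 2 + n) - s1) - (L : ℝ) * (u (N + 1 + n) - s2)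
          + ((L : ℝ) * (s1 - s2) - z)| := by rw [hYeq]
      _ ≤ |(L : ℝ) * (u (N + 2 + n) - s1) - (L : ℝ) * (u (N + 1 + n) - s2)|
          + |(L : ℝ) * (s1 - s2) - z| := abs_add_le _ _
      _ ≤ |(L : ℝ) * (u (N + 2 + n) - s1)| + |(L : ℝ) * (u (N + 1 + n) - s2)|
          + |(L : ℝ) * (s1 - s2) - z| := by
            have h : |(L : ℝ) * (u (N + 2 + n) - s1) - (L : ℝ) * (u (N + 1 + n) - s2)|
                ≤ |(L : ℝ) * (u (N + 2 + n) - s1)| + |(L : ℝ) * (u (N + 1 + n) - s2)| := by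
              rw [sub_eq_add_neg]
              exact (abs_add_le _ _).trans (by rw [abs_neg])
            linarith
      _ < ε / 2 + ε / 2 + ε := by linarith
      _ = 2 * ε := by ring
  exact lt_of_le_of_lt (min_fract_le_abs_sub Y Z) key
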